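/- Let λ ∈ ℝ^N with M := ‖λ‖² ≠ 0, let α, α₊ ∈ ℝ, and let F : ℝ → ℝ be differentiable. Define the potential V(q) = −(α/2)‖q‖² − (α₊/M)·(λ·q) + F(M‖q‖² − (λ·q)²) and the map Φ(q,p) = (∇V(q) − p, q), i.e. Φ(q,p) = (−α·q − (α₊/M)·λ + 2F'(M‖q‖² − (λ·q)²)·(M·q − (λ·q)·λ) − p, q). Then the function I(q,p) = (λ·p)² + (λ·q)² + α·(λ·p)(λ·q) + α₊·(λ·p + λ·q) is an invariant of Φ: I(Φ(q,p)) = I(q,p) for all (q,p). -/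

import Mathlib

/-- Dot product on `ℝ^N`. -/
noncomputable def dotProd {N : ℕ} (x y : Fin N → ℝ) : ℝ := ∑ i, x i * y i

lemma dotProd_expand {N : ℕ} (lam q p : Fin N → ℝ) (a b c d : ℝ) :
    dotProd lam (fun i => a * q i - b * lam i + c * (d * q i - dotProd lam q * lam i) - p i)
      = a * dotProd lam q - b * dotProd lam lam
        + c * (d * dotProd lam q - dotProd lam q * dotProd lam lam) - dotProd lam p := by
  simp only [dotProd]
  have h : ∀ i, lam i * (a * q i - b * lam i
      + c * (d * q i - (∑ j, lam j * q j) * lam i) - p i)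
    = a * (lam i * q i) - b * (lam i * lam i)
      + c * (d * (lam i * q i) - (∑ j, lam j * q j) * (lam i * lam i))
      - lam i * p i := fun i => by ring
  simp only [h, Finset.sum_sub_distrib, Finset.sum_add_distrib, ← Finset.mul_sum]

/-- For the singular potential
`V(q) = −(α/2)‖q‖² − (α₊/M)(λ·q) + F(M‖q‖² − (λ·q)²)` with `F` differentiable and
`M = ‖λ‖² ≠ 0`, the function
`I(q,p) = (λ·p)² + (λ·q)² + α(λ·p)(λ·q) + α₊(λ·p + λ·q)` is an invariant of the
associated standard-form map
`Φ(q,p) = (−αq − (α₊/M)λ + 2F'(M‖q‖² − (λ·q)²)(Mq − (λ·q)λ) − p, q)`. -/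
theorem invariant_of_singular_V2IIs (N : ℕ) (lam : Fin N → ℝ)
    (hM : dotProd lam lam ≠ 0) (α αp : ℝ) (F : ℝ → ℝ) (hF : Differentiable ℝ F) :
    let M : ℝ := dotProd lam lam
    let V : (Fin N → ℝ) → ℝ := fun q =>
      -(α / 2) * dotProd q q - (αp / M) * dotProd lam q
        + F (M * dotProd q q - (dotProd lam q) ^ 2)
    let Φ : (Fin N → ℝ) × (Fin N → ℝ) → (Fin N → ℝ) × (Fin N → ℝ) :=
      fun qp =>
        (fun i => -α * qp.1 i - (αp / M) * lam i
          + 2 * deriv F (M * dotProd qp.1 qp.1 - (dotProd lam qp.1) ^ 2)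
            * (M * qp.1 i - dotProd lam qp.1 * lam i)
          - qp.2 i, qp.1)
    let I : (Fin N → ℝ) → (Fin N → ℝ) → ℝ := fun q p =>
      (dotProd lam p) ^ 2 + (dotProd lam q) ^ 2
        + α * dotProd lam p * dotProd lam q
        + αp * (dotProd lam p + dotProd lam q)
    ∀ q p : Fin N → ℝ, I (Φ (q, p)).1 (Φ (q, p)).2 = I q p := by
  intro M V Φ I q p
  simp only [I, Φ]
  rw [dotProd_expand lam q p (-α) (αp / M)
    (2 * deriv F (M * dotProd q q - (dotProd lam q) ^ 2)) M]
  simp only [M]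
  field_simp
  ring
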